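/- arXiv:math/9811071 — 4 statements merged into one kernel-verified Lean document; each statement's English description precedes it below -/
import Mathlib

section
/- The face-centered cubic packing achieves the density π/√18: the set Λ = {√2·(a,b,c) : a,b,c ∈ ℤ, a+b+c even} has pairwise distances at least 2, and the ratio vol((⋃_{x∈Λ} B(x,1)) ∩ B(0,R)) / vol(B(0,R)) tends to π/√18 as R → ∞. -/
open MeasureTheory Filter Metric Real
open Pointwise

/-- The face-centered cubic packing: centers at `√2 • (a, b, c)` with `a + b + c` even. -/
def fccPacking : Set (EuclideanSpace ℝ (Fin 3)) :=
  {x | ∃ a b c : ℤ, Even (a + b + c) ∧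
    x = (EuclideanSpace.equiv (Fin 3) ℝ).symm
      ![Real.sqrt 2 * a, Real.sqrt 2 * b, Real.sqrt 2 * c]}

namespace FccAux

open Submodule

noncomputable abbrev E3 := EuclideanSpace ℝ (Fin 3)

noncomputable def es (w : Fin 3 → ℝ) : E3 := (EuclideanSpace.equiv (Fin 3) ℝ).symm w

lemma es_apply (w : Fin 3 → ℝ) (j : Fin 3) : es w j = w j := rfl

lemma sqrt2_pos : (0:ℝ) < √2 := Real.sqrt_pos.mpr (by norm_num)

lemma sq_sqrt2 : (√2:ℝ)^2 = 2 := Real.sq_sqrt (by norm_num)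

noncomputable def vv : Fin 3 → E3 :=
  ![es ![√2, √2, 0], es ![0, √2, √2], es ![√2, 0, √2]]

lemma norm_vv (i : Fin 3) : ‖vv i‖ = 2 := by
  fin_cases i <;>
  · rw [EuclideanSpace.norm_eq]
    simp [vv, es, Fin.sum_univ_three]
    rw [show (2:ℝ) + 2 = 2^2 by norm_num]
    exact Real.sqrt_sq (by norm_num)

lemma sum_smul_vv (g : Fin 3 → ℝ) :
    ∑ i, g i • vv i = es ![√2 * (g 0 + g 2), √2 * (g 0 + g 1), √2 * (g 1 + g 2)] := by
  ext j
  fin_cases j <;>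
    simp [vv, es, Fin.sum_univ_three, Matrix.cons_val_zero, Matrix.cons_val_one] <;> ring

lemma zsum_smul_vv (c : Fin 3 → ℤ) :
    ∑ i, c i • vv i
      = es ![√2 * ((c 0 : ℝ) + c 2), √2 * ((c 0 : ℝ) + c 1), √2 * ((c 1 : ℝ) + c 2)] := by
  have h : ∀ i, c i • vv i = ((c i : ℝ)) • vv i :=
    fun i => (Int.cast_smul_eq_zsmul ℝ (c i) (vv i)).symm
  rw [Finset.sum_congr rfl fun i _ => h i, sum_smul_vv]

lemma vv_li : LinearIndependent ℝ vv := by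
  rw [Fintype.linearIndependent_iff]
  intro g hg
  rw [sum_smul_vv] at hg
  have h0 : √2 * (g 0 + g 2) = 0 := congrArg (fun v : E3 => v 0) hg
  have h1 : √2 * (g 0 + g 1) = 0 := congrArg (fun v : E3 => v 1) hg
  have h2 : √2 * (g 1 + g 2) = 0 := congrArg (fun v : E3 => v 2) hg
  have s2 := sqrt2_pos.ne'
  have e0 := (mul_eq_zero.mp h0).resolve_left s2
  have e1 := (mul_eq_zero.mp h1).resolve_left s2
  have e2 := (mul_eq_zero.mp h2).resolve_left s2
  intro i; fin_cases i <;> simp <;> linarith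

noncomputable def bb : Module.Basis (Fin 3) ℝ E3 :=
  basisOfLinearIndependentOfCardEqFinrank vv_li (by simp)

lemma bb_eq : ⇑bb = vv :=
  coe_basisOfLinearIndependentOfCardEqFinrank _ _

lemma fcc_eq_span : fccPacking = (span ℤ (Set.range vv) : Set E3) := by
  ext x
  simp only [fccPacking, Set.mem_setOf_eq, SetLike.mem_coe, mem_span_range_iff_exists_fun]
  constructor
  · rintro ⟨a, b, c, hev, rfl⟩
    obtain ⟨t, ht⟩ := hev
    have ht' : (a:ℝ) + b + c = t + t := by exact_mod_cast ht
    refine ⟨![t - c, t - a, t - b], ?_⟩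
    rw [zsum_smul_vv]
    show es _ = es _
    congr 1
    refine funext fun j => ?_
    fin_cases j
    · show √2 * (((t - c : ℤ) : ℝ) + ((t - b : ℤ) : ℝ)) = √2 * (a : ℝ)
      push_cast; linear_combination (-√2) * ht'
    · show √2 * (((t - c : ℤ) : ℝ) + ((t - a : ℤ) : ℝ)) = √2 * (b : ℝ)
      push_cast; linear_combination (-√2) * ht'
    · show √2 * (((t - a : ℤ) : ℝ) + ((t - b : ℤ) : ℝ)) = √2 * (c : ℝ)
      push_cast; linear_combination (-√2) * ht'
  · rintro ⟨c, rfl⟩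
    rw [zsum_smul_vv]
    exact ⟨c 0 + c 2, c 0 + c 1, c 1 + c 2, ⟨c 0 + c 1 + c 2, by ring⟩, by push_cast; rfl⟩

lemma fcc_eq_span' : fccPacking = (span ℤ (Set.range ⇑bb) : Set E3) := by
  rw [bb_eq]; exact fcc_eq_span

/-! ### Part 1: packing property -/

lemma int_aux {p q r : ℤ} (hev : Even (p + q + r)) (hne : ¬(p = 0 ∧ q = 0 ∧ r = 0)) :
    2 ≤ p^2 + q^2 + r^2 := by
  have h1 : 1 ≤ p^2 + q^2 + r^2 := by
    have h : p ≠ 0 ∨ q ≠ 0 ∨ r ≠ 0 := by tauto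
    rcases h with h | h | h <;>
      nlinarith [sq_nonneg p, sq_nonneg q, sq_nonneg r, Int.one_le_abs h, sq_abs p, sq_abs q,
        sq_abs r, abs_nonneg p, abs_nonneg q, abs_nonneg r]
  have h2 : Even (p^2 + q^2 + r^2) := by
    simpa [parity_simps] using hev
  obtain ⟨k, hk⟩ := h2
  omega

lemma fcc_packing_dist : ∀ x ∈ fccPacking, ∀ y ∈ fccPacking, x ≠ y → 2 ≤ dist x y := by
  rintro x ⟨a, b, c, hev, rfl⟩ y ⟨a', b', c', hev', rfl⟩ hxy
  have hne : ¬(a - a' = 0 ∧ b - b' = 0 ∧ c - c' = 0) := by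
    rintro ⟨h1, h2, h3⟩
    exact hxy (by rw [show a = a' by omega, show b = b' by omega, show c = c' by omega])
  have hev2 : Even ((a - a') + (b - b') + (c - c')) := by
    obtain ⟨s, hs⟩ := hev; obtain ⟨t, ht⟩ := hev'
    exact ⟨s - t, by omega⟩
  have hD := int_aux hev2 hne
  have hD' : (4:ℝ) ≤ 2 * (((a - a')^2 + (b - b')^2 + (c - c')^2 : ℤ) : ℝ) := by
    have : ((2:ℤ):ℝ) ≤ (((a - a')^2 + (b - b')^2 + (c - c')^2 : ℤ) : ℝ) := by exact_mod_cast hD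
    push_cast at this ⊢
    linarith
  rw [EuclideanSpace.dist_eq]
  rw [Real.le_sqrt' (by norm_num)]
  have reduce : ∑ i, dist ((EuclideanSpace.equiv (Fin 3) ℝ).symm
        ![√2 * a, √2 * b, √2 * c] i) ((EuclideanSpace.equiv (Fin 3) ℝ).symm
        ![√2 * a', √2 * b', √2 * c'] i) ^ 2
      = (√2 * a - √2 * a')^2 + (√2 * b - √2 * b')^2 + (√2 * c - √2 * c')^2 := by
    rw [Fin.sum_univ_three]
    simp [Real.dist_eq, sq_abs]
  rw [reduce]
  push_cast at hD' ⊢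
  nlinarith [sq_sqrt2]


lemma gamma52 : Real.Gamma ((3:ℝ)/2 + 1) = 3/4 * √π := by
  rw [Real.Gamma_add_one (by norm_num), show (3:ℝ)/2 = 1/2 + 1 by norm_num,
    Real.Gamma_add_one (by norm_num), Real.Gamma_one_half_eq]
  ring

lemma ball_const : √π ^ 3 / Real.Gamma ((3:ℝ)/2 + 1) = 4 * π / 3 := by
  rw [gamma52, pow_succ, sq_sqrt Real.pi_pos.le]
  have h := Real.sqrt_pos.mpr Real.pi_pos
  field_simp

lemma volume_ball_E3 (r : ℝ) (hr : 0 ≤ r) :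
    volume (ball (0:E3) r) = ENNReal.ofReal (r^3 * (4 * π / 3)) := by
  rw [EuclideanSpace.volume_ball]
  simp only [Fintype.card_fin]
  rw [show ((3:ℕ):ℝ)/2 + 1 = (3:ℝ)/2 + 1 by norm_num, ball_const,
    ENNReal.ofReal_mul (by positivity), ENNReal.ofReal_pow hr]

noncomputable def b0 : Module.Basis (Fin 3) ℝ E3 := (EuclideanSpace.basisFun (Fin 3) ℝ).toBasis

lemma volume_FD_b0 : volume (ZSpan.fundamentalDomain b0) = 1 := by
  have hset : ZSpan.fundamentalDomain b0
      = (MeasurableEquiv.toLp 2 (Fin 3 → ℝ)).symm ⁻¹' (Set.univ.pi fun _ => Set.Ico (0:ℝ) 1) := by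
    ext x
    simp only [ZSpan.fundamentalDomain, Set.mem_setOf_eq, Set.mem_preimage, Set.mem_pi,
      Set.mem_univ, forall_true_left, b0, OrthonormalBasis.coe_toBasis_repr_apply,
      EuclideanSpace.basisFun_repr]
    rfl
  rw [hset, (EuclideanSpace.volume_preserving_symm_measurableEquiv_toLp (Fin 3)).measure_preimage
    ((MeasurableSet.univ_pi fun _ => measurableSet_Ico).nullMeasurableSet)]
  simp [volume_pi_pi]


lemma norm_bb (i : Fin 3) : ‖bb i‖ = 2 := by rw [bb_eq]; exact norm_vv i

lemma det_bb : b0.det ⇑bb = 4 * √2 := by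
  rw [Module.Basis.det_apply]
  have hM : b0.toMatrix ⇑bb = Matrix.of fun i j => (vv j) i := by
    ext i j
    rw [Module.Basis.toMatrix_apply, bb_eq]
    simp [b0, OrthonormalBasis.coe_toBasis_repr_apply, EuclideanSpace.basisFun_repr]
  rw [hM, Matrix.det_fin_three]
  have h2 : √2 * √2 = 2 := Real.mul_self_sqrt (by norm_num)
  simp [vv, es, Matrix.cons_val_zero, Matrix.cons_val_one]
  nlinarith [h2]

lemma volume_FD : volume (ZSpan.fundamentalDomain bb) = ENNReal.ofReal (4 * √2) := by
  rw [ZSpan.measure_fundamentalDomain bb volume b0, volume_FD_b0, det_bb, mul_one,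
    abs_of_pos (by positivity)]

noncomputable def FD : Set E3 := ZSpan.fundamentalDomain bb


def SS (r : ℝ) : Set E3 := {x | x ∈ fccPacking ∧ ‖x‖ < r}

lemma fcc_countable : fccPacking.Countable := by
  have : fccPacking ⊆ Set.range (fun p : ℤ × ℤ × ℤ =>
      (EuclideanSpace.equiv (Fin 3) ℝ).symm
        ![Real.sqrt 2 * p.1, Real.sqrt 2 * p.2.1, Real.sqrt 2 * p.2.2]) := by
    rintro x ⟨a, b, c, _, rfl⟩
    exact ⟨(a, b, c), rfl⟩
  exact (Set.countable_range _).mono this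

lemma SS_countable (r : ℝ) : (SS r).Countable :=
  fcc_countable.mono fun x hx => hx.1

lemma mem_span_of_fcc {x : E3} (h : x ∈ fccPacking) : x ∈ span ℤ (Set.range ⇑bb) := by
  rw [fcc_eq_span'] at h; exact h

lemma FD_norm {f : E3} (hf : f ∈ FD) : ‖f‖ ≤ 6 := by
  have h1 : ZSpan.fract bb f = f := ZSpan.fract_eq_self.mpr hf
  have h2 := ZSpan.norm_fract_le bb f
  rw [h1] at h2
  calc ‖f‖ ≤ ∑ i, ‖bb i‖ := h2
    _ = 6 := by simp [norm_bb, Fin.sum_univ_three]; norm_num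

lemma FD_meas : MeasurableSet FD := ZSpan.fundamentalDomain_measurableSet bb

lemma cells_pd (r : ℝ) : (SS r).PairwiseDisjoint (fun x => (x +ᵥ FD : Set E3)) := by
  intro x hx y hy hxy
  rw [Function.onFun, Set.disjoint_left]
  intro z hzx hzy
  rw [Set.mem_vadd_set_iff_neg_vadd_mem] at hzx hzy
  have h1 : ZSpan.fract bb z = -x +ᵥ z := by
    have : z = x + (-x +ᵥ z) := by simp [vadd_eq_add]
    conv_lhs => rw [this]
    rw [ZSpan.fract_zSpan_add bb _ (mem_span_of_fcc hx.1)]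
    exact ZSpan.fract_eq_self.mpr hzx
  have h2 : ZSpan.fract bb z = -y +ᵥ z := by
    have : z = y + (-y +ᵥ z) := by simp [vadd_eq_add]
    conv_lhs => rw [this]
    rw [ZSpan.fract_zSpan_add bb _ (mem_span_of_fcc hy.1)]
    exact ZSpan.fract_eq_self.mpr hzy
  apply hxy
  have := h1.symm.trans h2
  simpa [vadd_eq_add] using this

lemma balls_pd (r : ℝ) : (SS r).PairwiseDisjoint (fun x => ball x 1) := by
  intro x hx y hy hxy
  exact ball_disjoint_ball (by have := fcc_packing_dist x hx.1 y hy.1 hxy; linarith)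

/-- key relation between union of balls and union of cells over the same index set -/
lemma union_balls_eq_kappa (r : ℝ) :
    volume (⋃ x ∈ SS r, ball x 1)
      = (ENNReal.ofReal (4 * π / 3) / ENNReal.ofReal (4 * √2))
          * volume (⋃ x ∈ SS r, (x +ᵥ FD : Set E3)) := by
  have hvne : ENNReal.ofReal (4 * √2) ≠ 0 := by
    simp only [ne_eq, ENNReal.ofReal_eq_zero, not_le]
    positivity
  have hvnt : ENNReal.ofReal (4 * √2) ≠ ⊤ := ENNReal.ofReal_ne_top
  rw [measure_biUnion (SS_countable r) (balls_pd r) (fun x _ => measurableSet_ball),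
    measure_biUnion (SS_countable r) (cells_pd r) (fun x _ => FD_meas.const_vadd x)]
  have h1 : ∀ x : SS r, volume (ball (x:E3) 1) = ENNReal.ofReal (4 * π / 3) := by
    intro x
    rw [Measure.addHaar_ball_center, volume_ball_E3 1 zero_le_one, one_pow, one_mul]
  have h2 : ∀ x : SS r, volume ((x:E3) +ᵥ FD) = ENNReal.ofReal (4 * √2) := by
    intro x
    rw [measure_vadd, FD, volume_FD]
  simp_rw [h1, h2, ENNReal.tsum_mul_left.symm]
  congr 1
  ext x
  rw [ENNReal.div_mul_cancel hvne hvnt]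

lemma I1 (R : ℝ) : (⋃ x ∈ SS (R-1), ball x 1) ⊆ (⋃ x ∈ fccPacking, ball x 1) ∩ ball (0:E3) R := by
  intro y hy
  rw [Set.mem_iUnion₂] at hy
  obtain ⟨x, ⟨hx, hxn⟩, hyx⟩ := hy
  refine ⟨Set.mem_biUnion hx hyx, ?_⟩
  rw [mem_ball] at hyx
  rw [mem_ball, dist_zero_right]
  have h := dist_triangle y x 0
  simp only [dist_zero_right] at h
  linarith

lemma I2 (R : ℝ) : (⋃ x ∈ fccPacking, ball x 1) ∩ ball (0:E3) R ⊆ ⋃ x ∈ SS (R+1), ball x 1 := by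
  rintro y ⟨hy, hyR⟩
  simp only [Set.mem_iUnion] at hy ⊢
  obtain ⟨x, hx, hyx⟩ := hy
  refine ⟨x, ⟨hx, ?_⟩, hyx⟩
  rw [mem_ball] at hyx hyR
  rw [dist_zero_right] at hyR
  have h1 := dist_triangle x y 0
  simp only [dist_zero_right] at h1 ⊢
  rw [dist_comm] at h1
  linarith

lemma I3 (r : ℝ) : (⋃ x ∈ SS r, (x +ᵥ FD : Set E3)) ⊆ ball (0:E3) (r + 7) := by
  intro z hz
  simp only [Set.mem_iUnion] at hz
  obtain ⟨x, ⟨hx, hxn⟩, hzx⟩ := hz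
  rw [Set.mem_vadd_set_iff_neg_vadd_mem] at hzx
  have hf := FD_norm hzx
  rw [mem_ball_zero_iff]
  have : z = x + (-x +ᵥ z) := by simp [vadd_eq_add]
  rw [this]
  calc ‖x + (-x +ᵥ z)‖ ≤ ‖x‖ + ‖(-x +ᵥ z)‖ := norm_add_le _ _
    _ < r + 7 := by
        have : ‖(-x +ᵥ z : E3)‖ ≤ 6 := hf
        linarith

lemma I4 (r : ℝ) : ball (0:E3) (r - 7) ⊆ ⋃ x ∈ SS r, (x +ᵥ FD : Set E3) := by
  intro y hy
  rw [mem_ball_zero_iff] at hy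
  set x : E3 := (ZSpan.floor bb y : E3) with hx
  have hxmem : x ∈ fccPacking := by
    rw [fcc_eq_span']
    exact (ZSpan.floor bb y).2
  have hfr : ZSpan.fract bb y ∈ FD := ZSpan.fract_mem_fundamentalDomain bb y
  have hfr6 : ‖ZSpan.fract bb y‖ ≤ 6 := FD_norm hfr
  have hfr_eq : ZSpan.fract bb y = y - x := rfl
  have hxn : ‖x‖ < r := by
    have : x = y - ZSpan.fract bb y := by rw [hfr_eq]; abel
    rw [this]
    calc ‖y - ZSpan.fract bb y‖ ≤ ‖y‖ + ‖ZSpan.fract bb y‖ := norm_sub_le _ _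
      _ < r := by linarith
  simp only [Set.mem_iUnion]
  refine ⟨x, ⟨hxmem, hxn⟩, ?_⟩
  rw [Set.mem_vadd_set_iff_neg_vadd_mem]
  show -x +ᵥ y ∈ FD
  have : (-x +ᵥ y : E3) = y - x := by simp [vadd_eq_add]; abel
  rw [this, ← hfr_eq]
  exact hfr

lemma sqrt18 : √18 = 3 * √2 := by
  rw [show (18:ℝ) = 3^2 * 2 by norm_num, Real.sqrt_mul (by positivity), Real.sqrt_sq (by norm_num)]

noncomputable def κ : ENNReal := ENNReal.ofReal (4 * π / 3) / ENNReal.ofReal (4 * √2)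

lemma upper_bound {R : ℝ} (hR : 9 ≤ R) :
    volume ((⋃ x ∈ fccPacking, ball x 1) ∩ ball (0:E3) R) / volume (ball (0:E3) R)
      ≤ ENNReal.ofReal (((R+8)/R)^3 * (π / √18)) := by
  have hR0 : (0:ℝ) < R := by linarith
  have step1 : volume ((⋃ x ∈ fccPacking, ball x 1) ∩ ball (0:E3) R)
      ≤ κ * ENNReal.ofReal ((R+8)^3 * (4 * π / 3)) := by
    calc volume ((⋃ x ∈ fccPacking, ball x 1) ∩ ball (0:E3) R)
        ≤ volume (⋃ x ∈ SS (R+1), ball x 1) := measure_mono (I2 R)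
      _ = κ * volume (⋃ x ∈ SS (R+1), (x +ᵥ FD : Set E3)) := union_balls_eq_kappa (R+1)
      _ ≤ κ * volume (ball (0:E3) (R + 8)) := by
          refine mul_le_mul_right (measure_mono ?_) κ
          have := I3 (R+1)
          rwa [show R + 1 + 7 = R + 8 by ring] at this
      _ = κ * ENNReal.ofReal ((R+8)^3 * (4 * π / 3)) := by
          rw [volume_ball_E3 (R+8) (by linarith)]
  calc volume ((⋃ x ∈ fccPacking, ball x 1) ∩ ball (0:E3) R) / volume (ball (0:E3) R)
      ≤ (κ * ENNReal.ofReal ((R+8)^3 * (4 * π / 3))) / volume (ball (0:E3) R) :=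
        ENNReal.div_le_div_right step1 _
    _ = ENNReal.ofReal (((R+8)/R)^3 * (π / √18)) := by
        rw [volume_ball_E3 R hR0.le, κ,
          ← ENNReal.ofReal_div_of_pos (by positivity : (0:ℝ) < 4 * √2),
          ← ENNReal.ofReal_mul (by positivity),
          ← ENNReal.ofReal_div_of_pos (by positivity : (0:ℝ) < R^3 * (4 * π / 3))]
        congr 1
        rw [sqrt18]
        have h2 : √2 ≠ 0 := by positivity
        field_simp

lemma lower_bound {R : ℝ} (hR : 9 ≤ R) :
    ENNReal.ofReal (((R-8)/R)^3 * (π / √18))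
      ≤ volume ((⋃ x ∈ fccPacking, ball x 1) ∩ ball (0:E3) R) / volume (ball (0:E3) R) := by
  have hR0 : (0:ℝ) < R := by linarith
  have step1 : κ * ENNReal.ofReal ((R-8)^3 * (4 * π / 3))
      ≤ volume ((⋃ x ∈ fccPacking, ball x 1) ∩ ball (0:E3) R) := by
    calc κ * ENNReal.ofReal ((R-8)^3 * (4 * π / 3))
        = κ * volume (ball (0:E3) (R - 8)) := by rw [volume_ball_E3 (R-8) (by linarith)]
      _ ≤ κ * volume (⋃ x ∈ SS (R-1), (x +ᵥ FD : Set E3)) := by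
          refine mul_le_mul_right (measure_mono ?_) κ
          have := I4 (R-1)
          rwa [show R - 1 - 7 = R - 8 by ring] at this
      _ = volume (⋃ x ∈ SS (R-1), ball x 1) := (union_balls_eq_kappa (R-1)).symm
      _ ≤ volume ((⋃ x ∈ fccPacking, ball x 1) ∩ ball (0:E3) R) := measure_mono (I1 R)
  calc ENNReal.ofReal (((R-8)/R)^3 * (π / √18))
      = (κ * ENNReal.ofReal ((R-8)^3 * (4 * π / 3))) / volume (ball (0:E3) R) := by
        rw [volume_ball_E3 R hR0.le, κ,
          ← ENNReal.ofReal_div_of_pos (by positivity : (0:ℝ) < 4 * √2),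
          ← ENNReal.ofReal_mul (by positivity),
          ← ENNReal.ofReal_div_of_pos (by positivity : (0:ℝ) < R^3 * (4 * π / 3))]
        congr 1
        rw [sqrt18]
        have h2 : √2 ≠ 0 := by positivity
        field_simp
    _ ≤ _ := ENNReal.div_le_div_right step1 _

lemma tendsto_aux (c : ℝ) :
    Tendsto (fun R : ℝ => ENNReal.ofReal (((R+c)/R)^3 * (π / √18))) atTop
      (nhds (ENNReal.ofReal (π / √18))) := by
  have h1 : Tendsto (fun R : ℝ => (R+c)/R) atTop (nhds 1) := by
    have h2 : Tendsto (fun R : ℝ => 1 + c/R) atTop (nhds 1) := by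
      have := Tendsto.div_atTop (tendsto_const_nhds (x := c)) tendsto_id
      simpa using tendsto_const_nhds.add this
    refine h2.congr' ?_
    filter_upwards [eventually_ge_atTop 1] with R hR
    field_simp
  have h3 : Tendsto (fun R : ℝ => ((R+c)/R)^3 * (π / √18)) atTop (nhds (π / √18)) := by
    have := (h1.pow 3).mul_const (π / √18)
    simpa using this
  exact (ENNReal.continuous_ofReal.tendsto _).comp h3


theorem fcc_achieves_kepler_density' :
    (∀ x ∈ fccPacking, ∀ y ∈ fccPacking, x ≠ y → 2 ≤ dist x y) ∧
    Tendsto (fun R : ℝ =>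
        volume ((⋃ x ∈ fccPacking, ball x 1) ∩ ball (0 : EuclideanSpace ℝ (Fin 3)) R) /
          volume (ball (0 : EuclideanSpace ℝ (Fin 3)) R)) atTop
      (nhds (ENNReal.ofReal (π / Real.sqrt 18))) := by
  refine ⟨fcc_packing_dist, ?_⟩
  have hlo : Tendsto (fun R : ℝ => ENNReal.ofReal (((R-8)/R)^3 * (π / √18))) atTop
      (nhds (ENNReal.ofReal (π / √18))) := by
    have := tendsto_aux (-8)
    simpa [sub_eq_add_neg] using this
  have hhi := tendsto_aux 8
  refine tendsto_of_tendsto_of_tendsto_of_le_of_le' hlo hhi ?_ ?_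
  · filter_upwards [eventually_ge_atTop (9:ℝ)] with R hR
    exact lower_bound hR
  · filter_upwards [eventually_ge_atTop (9:ℝ)] with R hR
    exact upper_bound hR

end FccAux

/-- The face-centered cubic packing is a packing (pairwise distances at least 2) and
achieves the density `π / √18`. -/
theorem fcc_achieves_kepler_density :
    (∀ x ∈ fccPacking, ∀ y ∈ fccPacking, x ≠ y → 2 ≤ dist x y) ∧
    Tendsto (fun R : ℝ =>
        volume ((⋃ x ∈ fccPacking, ball x 1) ∩ ball (0 : EuclideanSpace ℝ (Fin 3)) R) /
          volume (ball (0 : EuclideanSpace ℝ (Fin 3)) R)) atTop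
      (nhds (ENNReal.ofReal (π / Real.sqrt 18))) :=
  FccAux.fcc_achieves_kepler_density'
end

section
/- The two-dimensional kissing number is exactly 6: any set S ⊆ ℝ² of points each at distance exactly 2 from the origin and with pairwise distances at least 2 has at most 6 elements, and there exists such a set with exactly 6 elements. -/
open Real Complex

private lemma dist_mk_aux (a b c d : ℝ) :
    dist ((a : ℂ) + b * I) ((c : ℂ) + d * I) = Real.sqrt ((a - c) ^ 2 + (b - d) ^ 2) := by
  rw [Complex.dist_eq]
  have h : (a : ℂ) + b * I - ((c : ℂ) + d * I) = ((a - c : ℝ) : ℂ) + ((b - d : ℝ) : ℂ) * I := by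
    push_cast; ring
  rw [h, Complex.norm_def, Complex.normSq_add_mul_I]

private lemma close_of_arg (z w : ℂ) (hz : ‖z‖ = 2) (hw : ‖w‖ = 2)
    (h : |z.arg - w.arg| < π / 3) : dist z w < 2 := by
  have hzre : z.re = 2 * Real.cos z.arg := by
    rw [← Complex.norm_mul_cos_arg z, hz]
  have hzim : z.im = 2 * Real.sin z.arg := by
    rw [← Complex.norm_mul_sin_arg z, hz]
  have hwre : w.re = 2 * Real.cos w.arg := by
    rw [← Complex.norm_mul_cos_arg w, hw]
  have hwim : w.im = 2 * Real.sin w.arg := by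
    rw [← Complex.norm_mul_sin_arg w, hw]
  have hcos : (1 : ℝ) / 2 < Real.cos (z.arg - w.arg) := by
    have h1 : Real.cos (π / 3) < Real.cos |z.arg - w.arg| :=
      Real.cos_lt_cos_of_nonneg_of_le_pi (abs_nonneg _)
        (by linarith [Real.pi_pos]) h
    rw [Real.cos_abs] at h1
    rw [Real.cos_pi_div_three] at h1
    linarith
  rw [Complex.dist_eq, Complex.norm_def]
  have h2 : Complex.normSq (z - w) < 4 := by
    rw [Complex.normSq_apply]
    simp only [Complex.sub_re, Complex.sub_im]
    rw [hzre, hzim, hwre, hwim]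
    nlinarith [Real.cos_sub z.arg w.arg, Real.sin_sq_add_cos_sq z.arg,
      Real.sin_sq_add_cos_sq w.arg, hcos]
  calc Real.sqrt (Complex.normSq (z - w)) < Real.sqrt 4 := by
        exact Real.sqrt_lt_sqrt (Complex.normSq_nonneg _) h2
    _ = 2 := by
        rw [show (4:ℝ) = 2^2 by norm_num, Real.sqrt_sq (by norm_num)]


private noncomputable def hexA : Fin 6 → ℝ := ![2, 1, -1, -2, -1, 1]
private noncomputable def hexB : Fin 6 → ℝ :=
  ![0, Real.sqrt 3, Real.sqrt 3, 0, -Real.sqrt 3, -Real.sqrt 3]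
private noncomputable def hexF : Fin 6 → ℂ := fun k => (hexA k : ℂ) + (hexB k) * I

private lemma vec_five (x0 x1 x2 x3 x4 x5 : ℝ) :
    (![x0,x1,x2,x3,x4,x5] : Fin 6 → ℝ) 5 = x5 := rfl

private lemma hex_dist : ∀ k l : Fin 6, k ≠ l → 2 ≤ dist (hexF k) (hexF l) := by
  intro k l hkl
  show 2 ≤ dist ((hexA k : ℂ) + (hexB k) * I) ((hexA l : ℂ) + (hexB l) * I)
  rw [dist_mk_aux]
  rw [show (2:ℝ) = Real.sqrt 4 by
    rw [show (4:ℝ) = 2^2 by norm_num, Real.sqrt_sq (by norm_num)]]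
  apply Real.sqrt_le_sqrt
  fin_cases k <;> fin_cases l <;> simp_all [hexA, hexB, vec_five] <;>
    nlinarith [Real.sq_sqrt (show (0:ℝ) ≤ 3 by norm_num)]

private lemma hex_norm : ∀ k : Fin 6, ‖hexF k‖ = 2 := by
  intro k
  show ‖(hexA k : ℂ) + (hexB k) * I‖ = 2
  rw [Complex.norm_def, Complex.normSq_add_mul_I]
  rw [show (2:ℝ) = Real.sqrt 4 by
    rw [show (4:ℝ) = 2^2 by norm_num, Real.sqrt_sq (by norm_num)]]
  congr 1
  fin_cases k <;> simp [hexA, hexB, vec_five] <;>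
    nlinarith [Real.sq_sqrt (show (0:ℝ) ≤ 3 by norm_num)]

/-- The two-dimensional kissing number is exactly 6: any set of points of norm 2 in ℝ²
with pairwise distances at least 2 has at most 6 elements, and some such set has
exactly 6 elements. -/
theorem kissing_number_dim2_eq_six :
    (∀ S : Set (EuclideanSpace ℝ (Fin 2)),
      (∀ x ∈ S, ‖x‖ = 2) → (∀ x ∈ S, ∀ y ∈ S, x ≠ y → 2 ≤ dist x y) →
      S.Finite ∧ S.ncard ≤ 6) ∧
    (∃ S : Set (EuclideanSpace ℝ (Fin 2)),
      S.ncard = 6 ∧ (∀ x ∈ S, ‖x‖ = 2) ∧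
      (∀ x ∈ S, ∀ y ∈ S, x ≠ y → 2 ≤ dist x y)) := by
  have e := Complex.orthonormalBasisOneI.repr
  constructor
  · intro S hnorm hdist
    -- move to ℂ
    set T : Set ℂ := e.symm '' S with hT
    have hTnorm : ∀ z ∈ T, ‖z‖ = 2 := by
      rintro z ⟨x, hx, rfl⟩
      rw [e.symm.norm_map]
      exact hnorm x hx
    have hTdist : ∀ z ∈ T, ∀ w ∈ T, z ≠ w → 2 ≤ dist z w := by
      rintro z ⟨x, hx, rfl⟩ w ⟨y, hy, rfl⟩ hne
      rw [e.symm.dist_map]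
      exact hdist x hx y hy (fun hxy => hne (by rw [hxy]))
    -- bucket map
    set g : ℂ → ℤ := fun z => ⌊(π - z.arg) * 3 / π⌋ with hg
    have hπ : (0:ℝ) < π := Real.pi_pos
    have hmaps : ∀ z ∈ T, g z ∈ (Finset.Icc (0:ℤ) 5 : Set ℤ) := by
      intro z _
      have h1 : -π < z.arg := Complex.neg_pi_lt_arg z
      have h2 : z.arg ≤ π := Complex.arg_le_pi z
      simp only [hg, Finset.coe_Icc, Set.mem_Icc]
      constructor
      · apply Int.floor_nonneg.2
        apply div_nonneg (by nlinarith) hπ.le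
      · have : (π - z.arg) * 3 / π < 6 := by
          rw [div_lt_iff₀ hπ]; nlinarith
        have := Int.floor_lt.2 (by exact_mod_cast this : (π - z.arg) * 3 / π < ((6:ℤ):ℝ))
        omega
    have hinj : Set.InjOn g T := by
      intro z hz w hw hgzw
      by_contra hne
      have hlt : dist z w < 2 := by
        apply close_of_arg z w (hTnorm z hz) (hTnorm w hw)
        have h1 : (π - z.arg) * 3 / π - 1 < (g z : ℝ) := by
          have := Int.sub_one_lt_floor ((π - z.arg) * 3 / π); linarith
        have h2 : (g z : ℝ) ≤ (π - z.arg) * 3 / π := Int.floor_le _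
        have h3 : (π - w.arg) * 3 / π - 1 < (g w : ℝ) := by
          have := Int.sub_one_lt_floor ((π - w.arg) * 3 / π); linarith
        have h4 : (g w : ℝ) ≤ (π - w.arg) * 3 / π := Int.floor_le _
        rw [hgzw] at h1 h2
        rw [abs_lt]
        have key : |(π - z.arg) * 3 / π - (π - w.arg) * 3 / π| < 1 := by
          rw [abs_lt]; constructor <;> linarith
        have expand : (π - z.arg) * 3 / π - (π - w.arg) * 3 / π = (w.arg - z.arg) * 3 / π := by
          field_simp; ring
        rw [expand, abs_lt] at key
        obtain ⟨k1, k2⟩ := key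
        rw [div_lt_iff₀ hπ] at k2
        rw [lt_div_iff₀ hπ] at k1
        constructor <;> nlinarith
      exact absurd (hTdist z hz w hw hne) (by linarith)
    have hTfin : T.Finite := by
      apply Set.Finite.of_finite_image _ hinj
      exact Set.Finite.subset (Finset.Icc (0:ℤ) 5).finite_toSet
        (Set.image_subset_iff.2 hmaps)
    have hSfin : S.Finite := by
      have h := hTfin.image e
      rw [hT, Set.image_image] at h
      simpa using h
    refine ⟨hSfin, ?_⟩
    have hcard : S.ncard = T.ncard := by
      rw [hT, Set.ncard_image_of_injective S e.symm.injective]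
    rw [hcard, ← Set.ncard_image_of_injOn hinj]
    calc (g '' T).ncard ≤ ((Finset.Icc (0:ℤ) 5 : Finset ℤ) : Set ℤ).ncard :=
          Set.ncard_le_ncard (Set.image_subset_iff.2 hmaps) (Finset.Icc (0:ℤ) 5).finite_toSet
      _ = 6 := by rw [Set.ncard_coe_finset]; decide
  · -- existence: hexagon
    have hfinj : Function.Injective hexF := by
      intro k l hkl
      by_contra hne
      have := hex_dist k l hne
      rw [hkl, dist_self] at this
      linarith
    refine ⟨e '' (Set.range hexF), ?_, ?_, ?_⟩
    · rw [Set.ncard_image_of_injective _ e.injective, ← Set.image_univ,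
        Set.ncard_image_of_injective _ hfinj, Set.ncard_univ]
      simp
    · rintro x ⟨z, ⟨k, rfl⟩, rfl⟩
      rw [e.norm_map]
      exact hex_norm k
    · rintro x ⟨z, ⟨k, rfl⟩, rfl⟩ y ⟨w, ⟨l, rfl⟩, rfl⟩ hne
      rw [e.dist_map]
      apply hex_dist
      intro hkl
      exact hne (by rw [hkl])
end

section
/- Lagrange's theorem on densest lattice packings in the plane: every full-rank lattice Λ ⊆ ℝ² all of whose nonzero vectors have norm at least 2 has covolume at least 2√3; equivalently, the density π/(covolume) of the associated lattice packing of unit disks is at most π/√12. -/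
open Real ZSpan MeasureTheory Module

noncomputable abbrev E2 := EuclideanSpace ℝ (Fin 2)

/-- The 2×2 determinant of the coordinates of two vectors of `ℝ²`. -/
noncomputable def detv (x y : E2) : ℝ := x 0 * y 1 - x 1 * y 0

lemma covol_eq_detv (L : Submodule ℤ E2) [DiscreteTopology L] [IsZLattice ℝ L]
    (b : Basis (Fin 2) ℤ L) :
    ZLattice.covolume L = |detv ((b 0 : E2)) ((b 1 : E2))| := by
  classical
  have h := ZLattice.covolume_eq_det_mul_measureReal L volume b
      (EuclideanSpace.basisFun (Fin 2) ℝ).toBasis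
  rw [h, measureReal_def]
  have hvol : (volume (fundamentalDomain (EuclideanSpace.basisFun (Fin 2) ℝ).toBasis)).toReal
      = 1 := by
    rw [measure_congr (ZSpan.fundamentalDomain_ae_parallelepiped
      (EuclideanSpace.basisFun (Fin 2) ℝ).toBasis volume)]
    rw [OrthonormalBasis.coe_toBasis]
    rw [(EuclideanSpace.basisFun (Fin 2) ℝ).volume_parallelepiped]
    simp
  rw [hvol, mul_one]
  congr 1
  rw [Basis.det_apply, Matrix.det_fin_two]
  simp only [Basis.toMatrix_apply, OrthonormalBasis.coe_toBasis_repr_apply,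
    EuclideanSpace.basisFun_repr, Function.comp_apply]
  rw [detv]; ring

lemma detv_sq (x y : E2) : (detv x y)^2 = ‖x‖^2 * ‖y‖^2 - (inner ℝ x y : ℝ)^2 := by
  have hx : ‖x‖^2 = x 0 ^ 2 + x 1 ^ 2 := by
    rw [← real_inner_self_eq_norm_sq]
    simp only [PiLp.inner_apply, Fin.sum_univ_two, RCLike.inner_apply, conj_trivial]
    ring
  have hy : ‖y‖^2 = y 0 ^ 2 + y 1 ^ 2 := by
    rw [← real_inner_self_eq_norm_sq]
    simp only [PiLp.inner_apply, Fin.sum_univ_two, RCLike.inner_apply, conj_trivial]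
    ring
  have hxy : (inner ℝ x y : ℝ) = x 0 * y 0 + x 1 * y 1 := by
    simp only [PiLp.inner_apply, Fin.sum_univ_two, RCLike.inner_apply, conj_trivial]
    ring
  rw [hx, hy, hxy, detv]; ring

lemma detv_int_comb (v0 v1 : E2) (m n p q : ℤ) :
    detv ((m:ℝ)•v0+(n:ℝ)•v1) ((p:ℝ)•v0+(q:ℝ)•v1) = ((m*q - n*p : ℤ) : ℝ) * detv v0 v1 := by
  simp [detv, PiLp.add_apply, PiLp.smul_apply, smul_eq_mul]
  ring

lemma detv_sub_smul (x y : E2) (c : ℝ) : detv x (y - c • x) = detv x y := by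
  simp [detv, PiLp.sub_apply, PiLp.smul_apply, smul_eq_mul]
  ring

lemma exists_shortest (L : Submodule ℤ E2) [DiscreteTopology L] [IsZLattice ℝ L] :
    ∃ u ∈ L, u ≠ 0 ∧ ∀ v ∈ L, v ≠ 0 → ‖u‖ ≤ ‖v‖ := by
  have hx : ∃ x ∈ L, x ≠ (0 : E2) := by
    by_contra h
    push_neg at h
    have hspan := IsZLattice.span_top (K := ℝ) (L := L)
    have : (L : Set E2) ⊆ {0} := fun y hy => h y hy
    have hle : Submodule.span ℝ (L : Set E2) ≤ ⊥ := by
      rw [← Submodule.span_zero_singleton ℝ]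
      exact Submodule.span_mono this
    rw [hspan] at hle
    exact top_ne_bot (le_bot_iff.mp hle)
  obtain ⟨x, hxL, hx0⟩ := hx
  have hfin : ((Metric.closedBall (0:E2) ‖x‖) ∩ L.toAddSubgroup).Finite := by
    have : DiscreteTopology L.toAddSubgroup := (inferInstance : DiscreteTopology L)
    exact Metric.finite_isBounded_inter_isClosed DiscreteTopology.isDiscrete Metric.isBounded_closedBall inferInstance
  set S : Set E2 := {v | v ∈ Metric.closedBall (0:E2) ‖x‖ ∧ v ∈ L ∧ v ≠ 0} with hS
  have hSfin : S.Finite := by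
    refine (hfin.subset ?_)
    rintro v ⟨h1, h2, _⟩
    exact ⟨h1, h2⟩
  have hSne : S.Nonempty := ⟨x, by simp [hS, Metric.mem_closedBall, dist_zero_right], hxL, hx0⟩
  obtain ⟨u, huS, humin⟩ := Set.exists_min_image S (fun v => ‖v‖) hSfin hSne
  refine ⟨u, huS.2.1, huS.2.2, fun v hvL hv0 => ?_⟩
  by_cases hv : ‖v‖ ≤ ‖x‖
  · exact humin v ⟨by simpa [Metric.mem_closedBall, dist_zero_right] using hv, hvL, hv0⟩
  · have h1 : ‖u‖ ≤ ‖x‖ := humin x ⟨by simp [Metric.mem_closedBall, dist_zero_right], hxL, hx0⟩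
    linarith [not_le.mp hv]

set_option maxHeartbeats 2000000 in
private theorem lagrange_main
    (L : Submodule ℤ (EuclideanSpace ℝ (Fin 2)))
    [DiscreteTopology L] [IsZLattice ℝ L]
    (hL : ∀ v ∈ L, v ≠ 0 → 2 ≤ ‖v‖) :
    2 * Real.sqrt 3 ≤ ZLattice.covolume L := by
  classical
  -- a basis of the lattice indexed by `Fin 2`
  have hcard : Fintype.card (Free.ChooseBasisIndex ℤ L) = 2 := by
    rw [← finrank_eq_card_chooseBasisIndex, ZLattice.rank ℝ L]; simp
  let b : Basis (Fin 2) ℤ L := (Free.chooseBasis ℤ L).reindex (Fintype.equivFinOfCardEq hcard)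
  set v0 : E2 := (b 0 : E2) with hv0
  set v1 : E2 := (b 1 : E2) with hv1
  have hcov : ZLattice.covolume L = |detv v0 v1| := covol_eq_detv L b
  have hdet0 : detv v0 v1 ≠ 0 := by
    intro h
    have := ZLattice.covolume_pos L volume
    rw [hcov, h] at this; simp at this
  -- shortest vector
  obtain ⟨u, huL, hu0, humin⟩ := exists_shortest L
  set uL : L := ⟨u, huL⟩ with huLdef
  have huL0 : uL ≠ 0 := by
    simp only [huLdef, ne_eq, Submodule.mk_eq_zero]; exact hu0
  set m : ℤ := b.repr uL 0 with hm
  set n : ℤ := b.repr uL 1 with hn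
  have hurep : uL = m • b 0 + n • b 1 := by
    conv_lhs => rw [← b.sum_repr uL]
    rw [Fin.sum_univ_two]
  have huE : u = (m:ℝ) • v0 + (n:ℝ) • v1 := by
    have := congrArg (Submodule.subtype L) hurep
    simpa [Submodule.coe_smul, Int.cast_smul_eq_zsmul] using this
  -- `u` is primitive : gcd m n = 1
  have hgcd : Int.gcd m n = 1 := by
    set g : ℤ := (Int.gcd m n : ℤ) with hg
    have hgnn : 0 ≤ g := hg ▸ Int.natCast_nonneg _
    have hg0 : g ≠ 0 := by
      intro h
      have hgz : Int.gcd m n = 0 := by exact_mod_cast hg.symm.trans h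
      obtain ⟨hm0, hn0⟩ := Int.gcd_eq_zero_iff.mp hgz
      rw [hm0, hn0] at hurep; simp at hurep; exact huL0 hurep
    have hdm : g ∣ m := Int.gcd_dvd_left m n
    have hdn : g ∣ n := Int.gcd_dvd_right m n
    set xL : L := (m / g) • b 0 + (n / g) • b 1 with hxL
    have hgx : g • xL = uL := by
      rw [hxL, smul_add, smul_smul, smul_smul, Int.mul_ediv_cancel' hdm,
        Int.mul_ediv_cancel' hdn, hurep]
    have hx0 : xL ≠ 0 := by
      intro h; rw [h, smul_zero] at hgx; exact huL0 hgx.symm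
    have hxmem : (xL : E2) ∈ L := xL.2
    have hxne : (xL : E2) ≠ 0 := by simpa [Submodule.coe_eq_zero] using hx0
    have hnorm : ‖u‖ = (g : ℝ) * ‖(xL : E2)‖ := by
      have : u = (g : ℝ) • (xL : E2) := by
        have := congrArg (Submodule.subtype L) hgx
        simpa [Int.cast_smul_eq_zsmul] using this.symm
      rw [this, norm_smul, Real.norm_eq_abs, abs_of_nonneg]
      exact_mod_cast hgnn
    have hle : ‖u‖ ≤ ‖(xL : E2)‖ := humin _ hxmem hxne
    have hxpos : 0 < ‖(xL : E2)‖ := norm_pos_iff.mpr hxne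
    have hgle : (g : ℝ) ≤ 1 := by
      nlinarith [hnorm, hle, hxpos]
    have hg1 : (1 : ℤ) ≤ g := by omega
    have hgone : g = 1 := le_antisymm (by exact_mod_cast hgle) hg1
    exact_mod_cast hg.symm.trans hgone
  -- Bezout: complete `u` to a basis
  obtain ⟨a, c, hac⟩ := Int.isCoprime_iff_gcd_eq_one.mpr hgcd
  set p : ℤ := -c with hp
  set q : ℤ := a with hq
  have hbez : m * q - n * p = 1 := by rw [hp, hq]; linarith [hac]
  set w0L : L := p • b 0 + q • b 1 with hw0L
  set w0 : E2 := (w0L : E2) with hw0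
  have hw0E : w0 = (p:ℝ) • v0 + (q:ℝ) • v1 := by
    rw [hw0, hw0L]
    simp only [Submodule.coe_add, Submodule.coe_smul, Int.cast_smul_eq_zsmul, hv0, hv1]
  have hduw0 : detv u w0 = detv v0 v1 := by
    rw [huE, hw0E, detv_int_comb, hbez]; simp
  -- reduce w0 modulo u
  have hunorm : (0:ℝ) < ‖u‖ := norm_pos_iff.mpr hu0
  set t : ℝ := (inner ℝ u w0 : ℝ) / ‖u‖^2 with ht
  set k : ℤ := round t with hk
  set w : E2 := w0 - (k:ℝ) • u with hw
  have hwmem : w ∈ L := by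
    rw [hw]
    refine Submodule.sub_mem L w0L.2 ?_
    have : (k:ℝ) • u = ((k • uL : L) : E2) := by
      simp [Int.cast_smul_eq_zsmul]
      rfl
    rw [this]; exact (k • uL).2
  have hduw : detv u w = detv v0 v1 := by rw [hw, detv_sub_smul, hduw0]
  have hwne : w ≠ 0 := by
    intro h
    rw [h] at hduw
    simp [detv] at hduw
    exact hdet0 hduw.symm
  -- inner product bound
  have hinner : (inner ℝ u w : ℝ) = (t - k) * ‖u‖^2 := by
    rw [hw, inner_sub_right, real_inner_smul_right, real_inner_self_eq_norm_sq, ht, sub_mul,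
      div_mul_cancel₀ _ (by positivity : (‖u‖:ℝ)^2 ≠ 0)]
  have hinnerbd : |(inner ℝ u w : ℝ)| ≤ ‖u‖^2 / 2 := by
    rw [hinner, abs_mul, abs_of_nonneg (by positivity : (0:ℝ) ≤ ‖u‖^2)]
    have h := mul_le_mul_of_nonneg_right (abs_sub_round t) (sq_nonneg ‖u‖)
    linarith
  -- final computation
  have hu2 : 2 ≤ ‖u‖ := hL u huL hu0
  have hw2 : ‖u‖ ≤ ‖w‖ := humin w hwmem hwne
  have hsq : (detv u w)^2 ≥ 12 := by
    rw [detv_sq]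
    have h1 : (inner ℝ u w : ℝ)^2 ≤ (‖u‖^2/2)^2 := by
      calc (inner ℝ u w : ℝ)^2 = |(inner ℝ u w : ℝ)|^2 := (sq_abs _).symm
        _ ≤ (‖u‖^2/2)^2 := pow_le_pow_left₀ (abs_nonneg _) hinnerbd 2
    have h2 : (4:ℝ) ≤ ‖u‖^2 := by nlinarith [hu2]
    have h3 : ‖u‖^2 ≤ ‖w‖^2 := by nlinarith [hu2, hw2]
    have h4 : ‖u‖^2 * ‖u‖^2 ≤ ‖u‖^2 * ‖w‖^2 :=
      mul_le_mul_of_nonneg_left h3 (by positivity)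
    nlinarith [h1, h2, h4, sq_nonneg (‖u‖^2 - 4)]
  rw [hcov, ← hduw]
  have h12 : Real.sqrt 12 = 2 * Real.sqrt 3 := by
    rw [show (12:ℝ) = 2^2 * 3 by norm_num, Real.sqrt_mul (by positivity), Real.sqrt_sq (by norm_num)]
  calc 2 * Real.sqrt 3 = Real.sqrt 12 := h12.symm
    _ ≤ Real.sqrt ((detv u w)^2) := Real.sqrt_le_sqrt (by linarith)
    _ = |detv u w| := Real.sqrt_sq_eq_abs _


/-- Lagrange's theorem: a full-rank lattice in ℝ² whose nonzero vectors all have norm at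
least 2 has covolume at least `2√3`; equivalently, the density of the associated lattice
packing of unit disks is at most `π / √12`. -/
theorem lagrange_densest_lattice_packing_dim2
    (L : Submodule ℤ (EuclideanSpace ℝ (Fin 2)))
    [DiscreteTopology L] [IsZLattice ℝ L]
    (hL : ∀ v ∈ L, v ≠ 0 → 2 ≤ ‖v‖) :
    2 * Real.sqrt 3 ≤ ZLattice.covolume L ∧
    π / ZLattice.covolume L ≤ π / Real.sqrt 12 := by
  have h1 := lagrange_main L hL
  refine ⟨h1, ?_⟩
  have h12 : Real.sqrt 12 = 2 * Real.sqrt 3 := by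
    rw [show (12:ℝ) = 2^2 * 3 by norm_num, Real.sqrt_mul (by positivity),
      Real.sqrt_sq (by norm_num)]
  rw [h12]
  gcongr
end

section
/- Gauss's theorem on densest lattice packings in three dimensions: every full-rank lattice Λ ⊆ ℝ³ all of whose nonzero vectors have norm at least 2 has covolume at least 4√2; equivalently, the density (4π/3)/(covolume) of the associated lattice packing of unit spheres is at most π/√18, the density of the face-centered cubic lattice. -/
open Real
open ZLattice Module MeasureTheory


section Core
variable {a b c r s t u : ℝ}

private lemma cert2 (ha : 0 < a) (hab : a ≤ b) (hbc : b ≤ c) :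
    0 ≤ a*b*c - a*b^2/2 - a^2*c/2 := by nlinarith [mul_nonneg (mul_nonneg ha.le (by linarith : (0:ℝ) ≤ b)) (by linarith : (0:ℝ) ≤ c - b), mul_nonneg (mul_nonneg ha.le (by linarith : (0:ℝ) ≤ c)) (by linarith : (0:ℝ) ≤ b - a)]

private lemma lGA0 (ha : 0 < a) (hab : a ≤ b) (hbc : b ≤ c)
    (hr0 : 0 ≤ r) (hs0 : 0 ≤ s) (hr : 2*r ≤ a) (hs : 2*s ≤ a) :
    0 ≤ a*b*c - 2*b*s^2 - 2*c*r^2 := by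
  nlinarith [mul_nonneg (mul_nonneg (by linarith : (0:ℝ) ≤ b) hs0) (by linarith : (0:ℝ) ≤ a - 2*s),
    mul_nonneg (mul_nonneg (by linarith : (0:ℝ) ≤ c) hr0) (by linarith : (0:ℝ) ≤ a - 2*r),
    mul_nonneg ha.le (mul_nonneg (by linarith : (0:ℝ) ≤ b) (by linarith : (0:ℝ) ≤ c - 2*s)),
    mul_nonneg ha.le (mul_nonneg (by linarith : (0:ℝ) ≤ c) (by linarith : (0:ℝ) ≤ b - 2*r))]

private lemma lE0s (ha : 0 < a) (hab : a ≤ b) (hbc : b ≤ c)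
    (hs0 : 0 ≤ s) (hs : 2*s ≤ a) :
    0 ≤ a*b*c - a*b^2/2 - 2*b*s^2 := by
  nlinarith [mul_nonneg (mul_nonneg (by linarith : (0:ℝ) ≤ b) hs0) (by linarith : (0:ℝ) ≤ a - 2*s),
    mul_nonneg (mul_nonneg ha.le (by linarith : (0:ℝ) ≤ b)) (by linarith : (0:ℝ) ≤ 2*c - b - 2*s)]

private lemma lEhs (ha : 0 < a) (hab : a ≤ b) (hbc : b ≤ c)
    (hs0 : 0 ≤ s) (hs : 2*s ≤ a) :
    0 ≤ a*b*c + a*b*s - a*b^2/2 - 2*b*s^2 - a^2*c/2 := by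
  have h2 := cert2 ha hab hbc
  nlinarith [mul_nonneg (by linarith : (0:ℝ) ≤ a - 2*s) h2, mul_nonneg (by linarith : (0:ℝ) ≤ 2*s) h2,
    mul_nonneg (mul_nonneg (mul_nonneg ha.le (by linarith : (0:ℝ) ≤ b)) hs0) (by linarith : (0:ℝ) ≤ a - 2*s), ha, mul_pos ha ha]

private lemma lE (ha : 0 < a) (hab : a ≤ b) (hbc : b ≤ c)
    (hr0 : 0 ≤ r) (hs0 : 0 ≤ s) (hr : 2*r ≤ a) (hs : 2*s ≤ a) :
    0 ≤ a*b*c + 2*b*r*s - a*b^2/2 - 2*b*s^2 - 2*c*r^2 := by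
  have h1 := lE0s ha hab hbc hs0 hs
  have h2 := lEhs ha hab hbc hs0 hs
  nlinarith [mul_nonneg (by linarith : (0:ℝ) ≤ a - 2*r) h1, mul_nonneg (by linarith : (0:ℝ) ≤ 2*r) h2,
    mul_nonneg (mul_nonneg (mul_nonneg ha.le (by linarith : (0:ℝ) ≤ c)) hr0) (by linarith : (0:ℝ) ≤ a - 2*r), ha]

private lemma lLf (ha : 0 < a) (hab : a ≤ b) (hbc : b ≤ c)
    (hs0 : 0 ≤ s) (hs : 2*s ≤ a) :
    0 ≤ a*b*c - a*b*s - a*b^2/2 - a^2*c/2 + 2*a*c*s - 2*c*s^2 := by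
  have h2 := cert2 ha hab hbc
  have h3 : 0 ≤ a*b*(2*c-a-b)/2 := by
    have h4 : (0:ℝ) ≤ a*b := mul_nonneg ha.le (by linarith)
    nlinarith [mul_nonneg h4 (by linarith : (0:ℝ) ≤ 2*c - a - b)]
  nlinarith [mul_nonneg (by linarith : (0:ℝ) ≤ a - 2*s) h2, mul_nonneg (by linarith : (0:ℝ) ≤ 2*s) h3,
    mul_nonneg (mul_nonneg (mul_nonneg ha.le (by linarith : (0:ℝ) ≤ c)) hs0) (by linarith : (0:ℝ) ≤ a - 2*s), ha]

private lemma lLg (ha : 0 < a) (hab : a ≤ b) (hbc : b ≤ c)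
    (hs0 : 0 ≤ s) (hs : 2*s ≤ a) :
    0 ≤ a*b*c - a*s*(b-2*s) - a*(b-2*s)^2/2 - 2*b*s^2 - a^2*c/2 := by
  have h2 := cert2 ha hab hbc
  nlinarith [mul_nonneg (by linarith : (0:ℝ) ≤ a - 2*s) h2, mul_nonneg (by linarith : (0:ℝ) ≤ 2*s) h2,
    mul_nonneg (mul_nonneg (mul_nonneg ha.le (by linarith : (0:ℝ) ≤ b)) hs0) (by linarith : (0:ℝ) ≤ a - 2*s), ha]

private lemma lB2L (ha : 0 < a) (hab : a ≤ b) (hbc : b ≤ c)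
    (hr0 : 0 ≤ r) (hs0 : 0 ≤ s) (hrs : 2*r + 2*s ≤ a) :
    0 ≤ a*b*c - 2*b*r*s - a*b^2/2 - 2*b*s^2 - 2*c*r^2 := by
  have hs2 : 2*s ≤ a := by linarith
  have h0 := lE0s ha hab hbc hs0 hs2
  rcases eq_or_lt_of_le (by linarith : 2*r ≤ a - 2*s) with h | h
  · have hr' : r = (a - 2*s)/2 := by linarith
    have hLf := lLf ha hab hbc hs0 hs2
    rw [hr']
    nlinarith [hLf]
  · have hLf := lLf ha hab hbc hs0 hs2
    nlinarith [mul_nonneg (by linarith : (0:ℝ) ≤ a - 2*s - 2*r) h0, mul_nonneg (by linarith : (0:ℝ) ≤ 2*r) hLf,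
      mul_nonneg (mul_nonneg (mul_nonneg (by linarith : (0:ℝ) ≤ c) hr0) (by linarith : (0:ℝ) ≤ a - 2*s)) (by linarith : (0:ℝ) ≤ a - 2*s - 2*r), h]

private lemma lB3 (ha : 0 < a) (hab : a ≤ b) (hbc : b ≤ c)
    (hr0 : 0 ≤ r) (hs0 : 0 ≤ s) (hr : 2*r ≤ a) (hs : 2*s ≤ a) (hrs : a ≤ 2*r + 2*s) :
    0 ≤ a*b*c - 2*r*s*(a+b-2*r-2*s) - a*(a+b-2*r-2*s)^2/2 - 2*b*s^2 - 2*c*r^2 := by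
  have hLf := lLf ha hab hbc hs0 hs
  have hLg := lLg ha hab hbc hs0 hs
  rcases eq_or_lt_of_le hs0 with h | h
  · have hr' : r = a/2 := by linarith
    rw [hr', ← h]
    nlinarith [cert2 ha hab hbc]
  · nlinarith [mul_nonneg (by linarith : (0:ℝ) ≤ a - 2*r) hLf, mul_nonneg (by linarith : (0:ℝ) ≤ 2*r - a + 2*s) hLg,
      mul_nonneg (mul_nonneg (mul_nonneg (by linarith : (0:ℝ) ≤ 2*r - a + 2*s) (by linarith : (0:ℝ) ≤ a - 2*r)) hs0) (by linarith : (0:ℝ) ≤ a + c - 2*s), h]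

private lemma core_norm (ha : 0 < a) (hab : a ≤ b) (hbc : b ≤ c)
    (hr0 : 0 ≤ r) (hs0 : 0 ≤ s) (hr : 2*r ≤ a) (hs : 2*s ≤ a)
    (ht1 : -b ≤ 2*t) (ht2 : 2*t ≤ b)
    (hK : c ≤ a+b+c-2*r-2*s+2*t) :
    a*b*c ≤ 2*(a*b*c + 2*r*s*t - a*t^2 - b*s^2 - c*r^2) := by
  have hb : (0:ℝ) < b := lt_of_lt_of_le ha hab
  have hGA0 := lGA0 ha hab hbc hr0 hs0 hr hs
  rcases le_or_gt 0 t with h0t | h0t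
  · -- case A
    have hE := lE ha hab hbc hr0 hs0 hr hs
    nlinarith [mul_nonneg (by linarith : (0:ℝ) ≤ b - 2*t) hGA0, mul_nonneg (by linarith : (0:ℝ) ≤ 2*t) hE,
      mul_nonneg (mul_nonneg (mul_nonneg ha.le hb.le) h0t) (by linarith : (0:ℝ) ≤ b - 2*t), hb]
  · -- case B, u = -t > 0
    rcases le_or_gt (2*r + 2*s) a with hcase | hcase
    · have hB2L := lB2L ha hab hbc hr0 hs0 hcase
      nlinarith [mul_nonneg (by linarith : (0:ℝ) ≤ b + 2*t) hGA0, mul_nonneg (by linarith : (0:ℝ) ≤ -(2*t)) hB2L,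
        mul_nonneg (mul_nonneg (mul_nonneg ha.le hb.le) (by linarith : (0:ℝ) ≤ -t)) (by linarith : (0:ℝ) ≤ b + 2*t), hb]
    · have hB3 := lB3 ha hab hbc hr0 hs0 hr hs hcase.le
      have hW : 0 < a + b - 2*r - 2*s := by linarith
      nlinarith [mul_nonneg (by linarith : (0:ℝ) ≤ (a+b-2*r-2*s) + 2*t) hGA0,
        mul_nonneg (by linarith : (0:ℝ) ≤ -(2*t)) hB3,
        mul_nonneg (mul_nonneg (mul_nonneg ha.le (by linarith : (0:ℝ) ≤ -t)) (by linarith : (0:ℝ) ≤ a+b-2*r-2*s)) (by linarith : (0:ℝ) ≤ (a+b-2*r-2*s) + 2*t), hW]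

private lemma core_sorted (ha : 0 < a) (hab : a ≤ b) (hbc : b ≤ c)
    (hr1 : -a ≤ 2*r) (hr2 : 2*r ≤ a) (hs1 : -a ≤ 2*s) (hs2 : 2*s ≤ a)
    (ht1 : -b ≤ 2*t) (ht2 : 2*t ≤ b)
    (hq1 : c ≤ a+b+c+2*r+2*s+2*t) (hq2 : c ≤ a+b+c+2*r-2*s-2*t)
    (hq3 : c ≤ a+b+c-2*r+2*s-2*t) (hq4 : c ≤ a+b+c-2*r-2*s+2*t) :
    a*b*c ≤ 2*(a*b*c + 2*r*s*t - a*t^2 - b*s^2 - c*r^2) := by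
  rcases le_or_gt 0 r with hr0 | hr0 <;> rcases le_or_gt 0 s with hs0 | hs0
  · have := core_norm ha hab hbc hr0 hs0 hr2 hs2 ht1 ht2 hq4; linarith [this]
  · have := core_norm ha hab hbc hr0 (by linarith : (0:ℝ) ≤ -s) hr2 (by linarith) (by linarith) (by linarith) (by linarith : c ≤ a+b+c-2*r-2*(-s)+2*(-t)); nlinarith [this]
  · have := core_norm ha hab hbc (by linarith : (0:ℝ) ≤ -r) hs0 (by linarith) hs2 (by linarith) (by linarith) (by linarith : c ≤ a+b+c-2*(-r)-2*s+2*(-t)); nlinarith [this]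
  · have := core_norm ha hab hbc (by linarith : (0:ℝ) ≤ -r) (by linarith : (0:ℝ) ≤ -s) (by linarith) (by linarith) ht1 ht2 (by linarith : c ≤ a+b+c-2*(-r)-2*(-s)+2*t); nlinarith [this]

end Core

section Core2
set_option maxHeartbeats 2000000
variable {a b c r s t : ℝ}

private lemma core_perm
    (ha : 0 < a) (hb : 0 < b) (hc : 0 < c)
    (hrA : 2*|r| ≤ a) (hrB : 2*|r| ≤ b)
    (hsA : 2*|s| ≤ a) (hsC : 2*|s| ≤ c)
    (htB : 2*|t| ≤ b) (htC : 2*|t| ≤ c)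
    (hq1 : max a (max b c) ≤ a+b+c+2*r+2*s+2*t)
    (hq2 : max a (max b c) ≤ a+b+c+2*r-2*s-2*t)
    (hq3 : max a (max b c) ≤ a+b+c-2*r+2*s-2*t)
    (hq4 : max a (max b c) ≤ a+b+c-2*r-2*s+2*t) :
    a*b*c ≤ 2*(a*b*c + 2*r*s*t - a*t^2 - b*s^2 - c*r^2) := by
  have hra := abs_le.mp (show |2*r| ≤ a by rw [abs_mul, abs_two]; linarith)
  have hrb := abs_le.mp (show |2*r| ≤ b by rw [abs_mul, abs_two]; linarith)
  have hsa := abs_le.mp (show |2*s| ≤ a by rw [abs_mul, abs_two]; linarith)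
  have hsc := abs_le.mp (show |2*s| ≤ c by rw [abs_mul, abs_two]; linarith)
  have htb := abs_le.mp (show |2*t| ≤ b by rw [abs_mul, abs_two]; linarith)
  have htc := abs_le.mp (show |2*t| ≤ c by rw [abs_mul, abs_two]; linarith)
  have hma : a ≤ max a (max b c) := le_max_left _ _
  have hmb : b ≤ max a (max b c) := le_trans (le_max_left _ _) (le_max_right _ _)
  have hmc : c ≤ max a (max b c) := le_trans (le_max_right _ _) (le_max_right _ _)
  rcases le_total a b with hab | hab <;> rcases le_total b c with hbc | hbc <;>
    rcases le_total a c with hac | hac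
  -- a ≤ b ≤ c
  · have := core_sorted ha hab hbc hra.1 hra.2 hsa.1 hsa.2 htb.1 htb.2
      (by linarith) (by linarith) (by linarith) (by linarith)
    nlinarith [this]
  · have := core_sorted ha hab hbc hra.1 hra.2 hsa.1 hsa.2 htb.1 htb.2
      (by linarith) (by linarith) (by linarith) (by linarith)
    nlinarith [this]
  -- a ≤ b, c ≤ b, a ≤ c : a ≤ c ≤ b : (a,c,b,s,r,t)
  · have := core_sorted (a := a) (b := c) (c := b) (r := s) (s := r) (t := t)
      ha hac hbc hsa.1 hsa.2 hra.1 hra.2 htc.1 htc.2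
      (by linarith) (by linarith) (by linarith) (by linarith)
    nlinarith [this]
  -- a ≤ b, c ≤ b, c ≤ a : c ≤ a ≤ b : (c,a,b,s,t,r)
  · have := core_sorted (a := c) (b := a) (c := b) (r := s) (s := t) (t := r)
      hc hac hab hsc.1 hsc.2 htc.1 htc.2 hra.1 hra.2
      (by linarith) (by linarith) (by linarith) (by linarith)
    nlinarith [this]
  -- b ≤ a, b ≤ c, a ≤ c : b ≤ a ≤ c : (b,a,c,r,t,s)
  · have := core_sorted (a := b) (b := a) (c := c) (r := r) (s := t) (t := s)
      hb hab hac hrb.1 hrb.2 htb.1 htb.2 hsa.1 hsa.2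
      (by linarith) (by linarith) (by linarith) (by linarith)
    nlinarith [this]
  -- b ≤ a, b ≤ c, c ≤ a : b ≤ c ≤ a : (b,c,a,t,r,s)
  · have := core_sorted (a := b) (b := c) (c := a) (r := t) (s := r) (t := s)
      hb hbc hac htb.1 htb.2 hrb.1 hrb.2 hsc.1 hsc.2
      (by linarith) (by linarith) (by linarith) (by linarith)
    nlinarith [this]
  -- b ≤ a, c ≤ b : c ≤ b ≤ a : (c,b,a,t,s,r)
  · have := core_sorted (a := c) (b := b) (c := a) (r := t) (s := s) (t := r)
      hc hbc hab htc.1 htc.2 hsc.1 hsc.2 hrb.1 hrb.2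
      (by linarith) (by linarith) (by linarith) (by linarith)
    nlinarith [this]
  · have := core_sorted (a := c) (b := b) (c := a) (r := t) (s := s) (t := r)
      hc hbc hab htc.1 htc.2 hsc.1 hsc.2 hrb.1 hrb.2
      (by linarith) (by linarith) (by linarith) (by linarith)
    nlinarith [this]

private lemma core_final
    (h4a : 4 ≤ a) (h4b : 4 ≤ b) (h4c : 4 ≤ c)
    (hrA : 2*|r| ≤ a) (hrB : 2*|r| ≤ b)
    (hsA : 2*|s| ≤ a) (hsC : 2*|s| ≤ c)
    (htB : 2*|t| ≤ b) (htC : 2*|t| ≤ c)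
    (hq1 : max a (max b c) ≤ a+b+c+2*r+2*s+2*t)
    (hq2 : max a (max b c) ≤ a+b+c+2*r-2*s-2*t)
    (hq3 : max a (max b c) ≤ a+b+c-2*r+2*s-2*t)
    (hq4 : max a (max b c) ≤ a+b+c-2*r-2*s+2*t) :
    32 ≤ a*b*c + 2*r*s*t - a*t^2 - b*s^2 - c*r^2 := by
  have h := core_perm (by linarith) (by linarith) (by linarith) hrA hrB hsA hsC htB htC
    hq1 hq2 hq3 hq4
  have h16 : (16:ℝ) ≤ a*b := by nlinarith
  have h64 : (64:ℝ) ≤ a*b*c := by nlinarith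
  linarith

end Core2


open Module

private lemma exists_update_basis {R M : Type*} [CommRing R] [AddCommGroup M] [Module R M]
    (b : Basis (Fin 3) R M) (i : Fin 3) (m : Fin 3 → R) (hm : m i * m i = 1) :
    ∃ b' : Basis (Fin 3) R M, b' i = ∑ k, m k • b k ∧ ∀ j, j ≠ i → b' j = b j := by
  classical
  set ε := m i with hε
  set m' : Fin 3 → R := Function.update m i 0 with hm'
  set W : M := ∑ k, m' k • b k with hW
  have hupd : ∀ k, m' k • b k = Function.update (fun k => m k • b k) i 0 k := by
    intro k
    by_cases hk : k = i
    · subst hk; simp [hm']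
    · simp [hm', hk]
  have hW' : W = ∑ k ∈ Finset.univ.erase i, m k • b k := by
    rw [hW, Finset.sum_congr rfl (fun k _ => hupd k),
      Finset.sum_update_of_mem (Finset.mem_univ i), zero_add,
      Finset.sdiff_singleton_eq_erase]
  have hsum : ∑ k, m k • b k = ε • b i + W := by
    rw [hW', ← Finset.add_sum_erase _ _ (Finset.mem_univ i)]
  set v : Fin 3 → M := Function.update (⇑b) i (∑ k, m k • b k) with hv
  set v' : Fin 3 → M := Function.update (⇑b) i (ε • b i - ε • W) with hv'
  set f : M →ₗ[R] M := b.constr R v with hf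
  set g : M →ₗ[R] M := b.constr R v' with hg
  have hfb : ∀ k, f (b k) = v k := fun k => b.constr_basis R v k
  have hgb : ∀ k, g (b k) = v' k := fun k => b.constr_basis R v' k
  have hfW : f W = W := by
    rw [hW, map_sum]
    refine Finset.sum_congr rfl fun k _ => ?_
    rw [LinearMap.map_smul, hfb]
    by_cases hk : k = i
    · simp [hk, hm']
    · simp [hv, hk]
  have hgW : g W = W := by
    rw [hW, map_sum]
    refine Finset.sum_congr rfl fun k _ => ?_
    rw [LinearMap.map_smul, hgb]
    by_cases hk : k = i
    · simp [hk, hm']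
    · simp [hv', hk]
  have hfg : f.comp g = LinearMap.id := by
    refine b.ext fun j => ?_
    by_cases hj : j = i
    · subst hj
      simp only [LinearMap.comp_apply, LinearMap.id_apply, hgb]
      rw [show v' j = ε • b j - ε • W by simp [hv'], map_sub, LinearMap.map_smul,
        LinearMap.map_smul, hfb, hfW, show v j = ∑ k, m k • b k by simp [hv], hsum,
        smul_add, smul_smul, hm, one_smul]
      abel
    · simp only [LinearMap.comp_apply, LinearMap.id_apply, hgb]
      rw [show v' j = b j by simp [hv', hj], hfb, show v j = b j by simp [hv, hj]]
  have hgf : g.comp f = LinearMap.id := by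
    refine b.ext fun j => ?_
    by_cases hj : j = i
    · subst hj
      simp only [LinearMap.comp_apply, LinearMap.id_apply, hfb]
      rw [show v j = ∑ k, m k • b k by simp [hv], hsum, map_add, LinearMap.map_smul, hgb, hgW,
        show v' j = ε • b j - ε • W by simp [hv'], smul_sub, smul_smul, smul_smul, hm, one_smul]
      rw [one_smul]
      abel
    · simp only [LinearMap.comp_apply, LinearMap.id_apply, hfb]
      rw [show v j = b j by simp [hv, hj], hgb, show v' j = b j by simp [hv', hj]]
  refine ⟨b.map (LinearEquiv.ofLinear f g hfg hgf), ?_, fun j hj => ?_⟩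
  · rw [Basis.map_apply]
    simpa using (hfb i).trans (by simp [hv])
  · rw [Basis.map_apply]
    simpa using (hfb j).trans (by simp [hv, hj])

open ZLattice Module

private lemma exists_min_basis (L : Submodule ℤ (EuclideanSpace ℝ (Fin 3)))
    [DiscreteTopology L] [IsZLattice ℝ L] :
    ∃ b₀ : Basis (Fin 3) ℤ L, ∀ b : Basis (Fin 3) ℤ L,
      (∑ i, ‖(b₀ i : EuclideanSpace ℝ (Fin 3))‖^2) ≤ ∑ i, ‖(b i : EuclideanSpace ℝ (Fin 3))‖^2 := by
  classical
  have hfree : Module.Free ℤ L := ZLattice.module_free ℝ L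
  have hfin : Module.Finite ℤ L := ZLattice.module_finite ℝ L
  have hcard : Fintype.card (Module.Free.ChooseBasisIndex ℤ L) = 3 := by
    rw [← Module.finrank_eq_card_chooseBasisIndex, ZLattice.rank ℝ L, finrank_euclideanSpace_fin]
  let e : Module.Free.ChooseBasisIndex ℤ L ≃ Fin 3 := Fintype.equivFinOfCardEq hcard
  let binit : Basis (Fin 3) ℤ L := (Module.Free.chooseBasis ℤ L).reindex e
  set F : Basis (Fin 3) ℤ L → ℝ := fun b => ∑ i, ‖(b i : EuclideanSpace ℝ (Fin 3))‖^2 with hF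
  set C₀ : ℝ := F binit with hC₀
  -- finitely many short lattice vectors
  haveI : DiscreteTopology L.toAddSubgroup := ‹DiscreteTopology L›
  have hclosed : IsClosed (L : Set (EuclideanSpace ℝ (Fin 3))) :=
    AddSubgroup.isClosed_of_discrete (H := L.toAddSubgroup)
  have hKfin : (Metric.closedBall (0 : EuclideanSpace ℝ (Fin 3)) (Real.sqrt C₀) ∩
      (L : Set (EuclideanSpace ℝ (Fin 3)))).Finite :=
    Metric.finite_isBounded_inter_isClosed (isDiscrete_iff_discreteTopology.mpr ‹DiscreteTopology L›) Metric.isBounded_closedBall hclosed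
  set K := Metric.closedBall (0 : EuclideanSpace ℝ (Fin 3)) (Real.sqrt C₀) ∩
      (L : Set (EuclideanSpace ℝ (Fin 3))) with hK
  haveI : Finite K := hKfin.to_subtype
  set S : Set ℝ := Set.range (fun f : Fin 3 → K => ∑ i, ‖(f i : EuclideanSpace ℝ (Fin 3))‖^2)
    with hS
  have hSfin : S.Finite := Set.finite_range _
  have key : ∀ b : Basis (Fin 3) ℤ L, F b ≤ C₀ → F b ∈ S := by
    intro b hb
    have hmem : ∀ i, ((b i : EuclideanSpace ℝ (Fin 3))) ∈ K := by
      intro i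
      have h1 : ‖(b i : EuclideanSpace ℝ (Fin 3))‖^2 ≤ C₀ := by
        refine le_trans ?_ hb
        exact Finset.single_le_sum (f := fun i => ‖(b i : EuclideanSpace ℝ (Fin 3))‖^2)
          (fun j _ => by positivity) (Finset.mem_univ i)
      constructor
      · rw [Metric.mem_closedBall, dist_zero_right]
        have h2 : (0:ℝ) ≤ ‖(b i : EuclideanSpace ℝ (Fin 3))‖ := norm_nonneg _
        nlinarith [Real.sq_sqrt (le_trans (by positivity) h1), Real.sqrt_nonneg C₀]
      · exact (b i).2
    exact ⟨fun i => ⟨(b i : EuclideanSpace ℝ (Fin 3)), hmem i⟩, rfl⟩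
  set T : Set ℝ := {x ∈ S | ∃ b : Basis (Fin 3) ℤ L, F b = x} with hT
  have hTfin : T.Finite := hSfin.subset (Set.sep_subset _ _)
  have hTne : T.Nonempty := ⟨C₀, key binit le_rfl, binit, rfl⟩
  obtain ⟨x₀, hx₀T, hx₀min⟩ := Set.exists_min_image T id hTfin hTne
  obtain ⟨b₀, hb₀⟩ := hx₀T.2
  refine ⟨b₀, fun b => ?_⟩
  have hx₀C₀ : x₀ ≤ C₀ := hx₀min C₀ ⟨key binit le_rfl, binit, rfl⟩
  rcases le_or_gt (F b) C₀ with h | h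
  · have hmem : F b ∈ T := ⟨key b h, b, rfl⟩
    show F b₀ ≤ F b
    rw [hb₀]
    exact hx₀min (F b) hmem
  · show F b₀ ≤ F b
    rw [hb₀]
    linarith

private lemma min_q {L : Submodule ℤ (EuclideanSpace ℝ (Fin 3))}
    (b₀ : Basis (Fin 3) ℤ L)
    (hmin : ∀ b : Basis (Fin 3) ℤ L, (∑ j, ‖(b₀ j : EuclideanSpace ℝ (Fin 3))‖^2) ≤
      ∑ j, ‖(b j : EuclideanSpace ℝ (Fin 3))‖^2)
    (m : Fin 3 → ℤ) (i : Fin 3) (hm : m i * m i = 1) :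
    ‖(b₀ i : EuclideanSpace ℝ (Fin 3))‖^2 ≤
      ‖∑ k, m k • (b₀ k : EuclideanSpace ℝ (Fin 3))‖^2 := by
  classical
  obtain ⟨b', hb'i, hb'j⟩ := exists_update_basis b₀ i m hm
  have h := hmin b'
  have hco : ((b' i : L) : EuclideanSpace ℝ (Fin 3)) =
      ∑ k, m k • (b₀ k : EuclideanSpace ℝ (Fin 3)) := by
    rw [hb'i]
    push_cast
    rfl
  rw [← Finset.sum_erase_add _ _ (Finset.mem_univ i),
    ← Finset.sum_erase_add (f := fun j => ‖(b' j : EuclideanSpace ℝ (Fin 3))‖^2) _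
      (Finset.mem_univ i)] at h
  have heq : ∑ j ∈ Finset.univ.erase i, ‖(b' j : EuclideanSpace ℝ (Fin 3))‖^2 =
      ∑ j ∈ Finset.univ.erase i, ‖(b₀ j : EuclideanSpace ℝ (Fin 3))‖^2 :=
    Finset.sum_congr rfl fun j hj => by rw [hb'j j (Finset.mem_erase.mp hj).1]
  rw [heq, hco] at h
  linarith

private lemma inner_comb (x y z : EuclideanSpace ℝ (Fin 3)) (e f g : ℝ) :
    ‖e•x + f•y + g•z‖^2 = e^2*‖x‖^2 + f^2*‖y‖^2 + g^2*‖z‖^2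
      + 2*e*f*(inner ℝ x y : ℝ) + 2*e*g*(inner ℝ x z : ℝ) + 2*f*g*(inner ℝ y z : ℝ) := by
  rw [← real_inner_self_eq_norm_sq, ← real_inner_self_eq_norm_sq x,
    ← real_inner_self_eq_norm_sq y, ← real_inner_self_eq_norm_sq z]
  simp only [inner_add_left, inner_add_right, real_inner_smul_left, real_inner_smul_right]
  rw [real_inner_comm y x, real_inner_comm z x, real_inner_comm z y]
  ring




private lemma sqrt_step {x : ℝ} (hx : 0 < x) (h : 32 ≤ x^2) : 4*Real.sqrt 2 ≤ x := by
  nlinarith [Real.sq_sqrt (show (0:ℝ) ≤ 2 by norm_num), Real.sqrt_nonneg 2]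

private lemma dens_step {x : ℝ} (hx : 0 < x) (h : 4*Real.sqrt 2 ≤ x) :
    (4*Real.pi/3)/x ≤ Real.pi/Real.sqrt 18 := by
  have h18 : Real.sqrt 18 = 3 * Real.sqrt 2 := by
    rw [show (18:ℝ) = 3^2 * 2 by norm_num, Real.sqrt_mul (by positivity), Real.sqrt_sq (by norm_num)]
  have hs2 : 0 < Real.sqrt 2 := Real.sqrt_pos.mpr (by norm_num)
  have hpi := Real.pi_pos
  rw [h18, div_le_div_iff₀ hx (by positivity)]
  nlinarith [mul_le_mul_of_nonneg_left h (le_of_lt hpi)]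

set_option maxHeartbeats 2000000 in
/-- Gauss's theorem: a full-rank lattice in ℝ³ whose nonzero vectors all have norm at
least 2 has covolume at least `4√2`; equivalently, the density of the associated lattice
packing of unit spheres is at most `π / √18`, the density of the face-centered cubic
lattice. -/
theorem gauss_densest_lattice_packing_dim3
    (L : Submodule ℤ (EuclideanSpace ℝ (Fin 3)))
    [DiscreteTopology L] [IsZLattice ℝ L]
    (hL : ∀ v ∈ L, v ≠ 0 → 2 ≤ ‖v‖) :
    4 * Real.sqrt 2 ≤ ZLattice.covolume L ∧
    (4 * π / 3) / ZLattice.covolume L ≤ π / Real.sqrt 18 := by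
  classical
  obtain ⟨b₀, hmin⟩ := exists_min_basis L
  set v : Fin 3 → EuclideanSpace ℝ (Fin 3) := fun i => (b₀ i : EuclideanSpace ℝ (Fin 3)) with hv
  set A : ℝ := inner ℝ (v 0) (v 0) with hA
  set B : ℝ := inner ℝ (v 1) (v 1) with hB
  set C : ℝ := inner ℝ (v 2) (v 2) with hC
  set R : ℝ := inner ℝ (v 0) (v 1) with hR
  set S : ℝ := inner ℝ (v 0) (v 2) with hS
  set T : ℝ := inner ℝ (v 1) (v 2) with hT
  have hnA : ‖v 0‖^2 = A := (real_inner_self_eq_norm_sq _).symm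
  have hnB : ‖v 1‖^2 = B := (real_inner_self_eq_norm_sq _).symm
  have hnC : ‖v 2‖^2 = C := (real_inner_self_eq_norm_sq _).symm
  -- norms at least 2
  have hnorm : ∀ i, 2 ≤ ‖v i‖ := by
    intro i
    refine hL (v i) (SetLike.coe_mem _) ?_
    simpa [hv, Submodule.coe_eq_zero] using b₀.ne_zero i
  have h4a : 4 ≤ A := by have := hnorm 0; nlinarith [hnA]
  have h4b : 4 ≤ B := by have := hnorm 1; nlinarith [hnB]
  have h4c : 4 ≤ C := by have := hnorm 2; nlinarith [hnC]
  -- the quadratic form inequalities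
  have hQ : ∀ (m : Fin 3 → ℤ) (i : Fin 3), m i * m i = 1 →
      ‖v i‖^2 ≤ (m 0:ℝ)^2*A + (m 1:ℝ)^2*B + (m 2:ℝ)^2*C
        + 2*(m 0:ℝ)*(m 1:ℝ)*R + 2*(m 0:ℝ)*(m 2:ℝ)*S + 2*(m 1:ℝ)*(m 2:ℝ)*T := by
    intro m i hm
    have h := min_q b₀ hmin m i hm
    rw [Fin.sum_univ_three] at h
    rw [← Int.cast_smul_eq_zsmul ℝ (m 0), ← Int.cast_smul_eq_zsmul ℝ (m 1),
      ← Int.cast_smul_eq_zsmul ℝ (m 2), inner_comb] at h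
    simpa [hA, hB, hC, hR, hS, hT, hnA, hnB, hnC, hv] using h
  have hQ' : ∀ (m₀ m₁ m₂ : ℤ) (i : Fin 3), (![m₀, m₁, m₂]) i * (![m₀, m₁, m₂]) i = 1 →
      ‖v i‖^2 ≤ (m₀:ℝ)^2*A + (m₁:ℝ)^2*B + (m₂:ℝ)^2*C
        + 2*(m₀:ℝ)*(m₁:ℝ)*R + 2*(m₀:ℝ)*(m₂:ℝ)*S + 2*(m₁:ℝ)*(m₂:ℝ)*T := by
    intro m₀ m₁ m₂ i hm
    simpa using hQ ![m₀, m₁, m₂] i hm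
  -- pair inequalities
  have e1 := hQ' 1 (-1) 0 0 (by norm_num)
  have e2 := hQ' 1 (-1) 0 1 (by norm_num)
  have e3 := hQ' 1 1 0 0 (by norm_num)
  have e4 := hQ' 1 1 0 1 (by norm_num)
  have f1 := hQ' 1 0 (-1) 0 (by norm_num)
  have f2 := hQ' 1 0 (-1) 2 (by decide)
  have f3 := hQ' 1 0 1 0 (by norm_num)
  have f4 := hQ' 1 0 1 2 (by decide)
  have g1 := hQ' 0 1 (-1) 1 (by norm_num)
  have g2 := hQ' 0 1 (-1) 2 (by decide)
  have g3 := hQ' 0 1 1 1 (by norm_num)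
  have g4 := hQ' 0 1 1 2 (by decide)
  simp only [hnA, hnB, hnC] at e1 e2 e3 e4 f1 f2 f3 f4 g1 g2 g3 g4
  norm_num at e1 e2 e3 e4 f1 f2 f3 f4 g1 g2 g3 g4
  have hrA : 2*|R| ≤ A := by
    rw [show 2*|R| = |2*R| by rw [abs_mul, abs_two], abs_le]
    constructor <;> linarith
  have hrB : 2*|R| ≤ B := by
    rw [show 2*|R| = |2*R| by rw [abs_mul, abs_two], abs_le]
    constructor <;> linarith
  have hsA : 2*|S| ≤ A := by
    rw [show 2*|S| = |2*S| by rw [abs_mul, abs_two], abs_le]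
    constructor <;> linarith
  have hsC : 2*|S| ≤ C := by
    rw [show 2*|S| = |2*S| by rw [abs_mul, abs_two], abs_le]
    constructor <;> linarith
  have htB : 2*|T| ≤ B := by
    rw [show 2*|T| = |2*T| by rw [abs_mul, abs_two], abs_le]
    constructor <;> linarith
  have htC : 2*|T| ≤ C := by
    rw [show 2*|T| = |2*T| by rw [abs_mul, abs_two], abs_le]
    constructor <;> linarith
  -- the (±1,±1,±1) inequalities
  have p1a := hQ' 1 1 1 0 (by norm_num)
  have p1b := hQ' 1 1 1 1 (by norm_num)
  have p1c := hQ' 1 1 1 2 (by decide)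
  have p2a := hQ' 1 1 (-1) 0 (by norm_num)
  have p2b := hQ' 1 1 (-1) 1 (by norm_num)
  have p2c := hQ' 1 1 (-1) 2 (by decide)
  have p3a := hQ' 1 (-1) 1 0 (by norm_num)
  have p3b := hQ' 1 (-1) 1 1 (by norm_num)
  have p3c := hQ' 1 (-1) 1 2 (by decide)
  have p4a := hQ' 1 (-1) (-1) 0 (by norm_num)
  have p4b := hQ' 1 (-1) (-1) 1 (by norm_num)
  have p4c := hQ' 1 (-1) (-1) 2 (by decide)
  simp only [hnA, hnB, hnC] at p1a p1b p1c p2a p2b p2c p3a p3b p3c p4a p4b p4c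
  norm_num at p1a p1b p1c p2a p2b p2c p3a p3b p3c p4a p4b p4c
  have hq1 : max A (max B C) ≤ A+B+C+2*R+2*S+2*T :=
    max_le (by linarith) (max_le (by linarith) (by linarith))
  have hq2 : max A (max B C) ≤ A+B+C+2*R-2*S-2*T :=
    max_le (by linarith) (max_le (by linarith) (by linarith))
  have hq3 : max A (max B C) ≤ A+B+C-2*R+2*S-2*T :=
    max_le (by linarith) (max_le (by linarith) (by linarith))
  have hq4 : max A (max B C) ≤ A+B+C-2*R-2*S+2*T :=
    max_le (by linarith) (max_le (by linarith) (by linarith))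
  have h32 : 32 ≤ A*B*C + 2*R*S*T - A*T^2 - B*S^2 - C*R^2 :=
    core_final h4a h4b h4c hrA hrB hsA hsC htB htC hq1 hq2 hq3 hq4
  -- covolume = |det|
  set bE : Basis (Fin 3) ℝ (EuclideanSpace ℝ (Fin 3)) :=
    (EuclideanSpace.basisFun (Fin 3) ℝ).toBasis with hbE
  have hcov := ZLattice.covolume_eq_det_mul_measureReal L volume b₀ bE
  have hvol : (volume (ZSpan.fundamentalDomain bE)).toReal = 1 := by
    rw [measure_congr (ZSpan.fundamentalDomain_ae_parallelepiped bE volume)]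
    rw [hbE, OrthonormalBasis.coe_toBasis,
      (EuclideanSpace.basisFun (Fin 3) ℝ).volume_parallelepiped, ENNReal.toReal_one]
  rw [measureReal_def, hvol, mul_one] at hcov
  set d : ℝ := bE.det (((↑) : L → EuclideanSpace ℝ (Fin 3)) ∘ b₀) with hd
  have hMij : ∀ i j, bE.toMatrix (((↑) : L → EuclideanSpace ℝ (Fin 3)) ∘ b₀) i j = v j i := by
    intro i j
    rw [Basis.toMatrix_apply]
    show bE.repr (v j) i = v j i
    rw [hbE, OrthonormalBasis.coe_toBasis_repr_apply, EuclideanSpace.basisFun_repr]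
  have hinner : ∀ x y : EuclideanSpace ℝ (Fin 3),
      (inner ℝ x y : ℝ) = x 0 * y 0 + x 1 * y 1 + x 2 * y 2 := by
    intro x y
    simp [PiLp.inner_apply, RCLike.inner_apply, Fin.sum_univ_three, mul_comm]
  have hd2 : d^2 = A*B*C + 2*R*S*T - A*T^2 - B*S^2 - C*R^2 := by
    rw [hd, Basis.det_apply, Matrix.det_fin_three]
    simp only [hMij]
    rw [hA, hB, hC, hR, hS, hT, hinner, hinner, hinner, hinner, hinner, hinner]
    ring
  have hcovpos := ZLattice.covolume_pos L volume
  have hcov2 : (ZLattice.covolume L)^2 = d^2 := by rw [hcov]; exact sq_abs d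
  have h1 : 4 * Real.sqrt 2 ≤ ZLattice.covolume L :=
    sqrt_step hcovpos (by rw [hcov2, hd2]; exact h32)
  exact ⟨h1, dens_step hcovpos h1⟩
end
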